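/- Let ρ̃₀ > 0 and let p : [0,∞) → ℝ be continuous on [0,∞), continuously differentiable on (0,∞), with p'(ρ) > 0 for all ρ > 0, limsup_{ρ→∞} p(ρ)/P(ρ) < ∞, and liminf_{ρ→∞} p(ρ)/ρ^γ ≥ p_∞ for some γ > 1 and p_∞ > 0, where P(ρ) = ρ ∫_{ρ̃₀}^{ρ} p(z)/z² dz for ρ > 0, extended continuously to ρ = 0. Then for every ρ̃ > 0 there exists a constant C > 0 such that ρ^γ ≤ C ( 1 + P(ρ) − P'(ρ̃)(ρ − ρ̃) − P(ρ̃) ) for all ρ ≥ 0. -/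

import Mathlib

open Filter Set
open MeasureTheory

/-- pointwise coercivity of the relative energy. For the
pressure potential `P ρ = ρ * ∫_{ρref0}^{ρ} p(z)/z² dz` (extended to `ρ = 0`
by continuity) associated with a pressure law `p` continuous on `[0,∞)`,
continuously differentiable on `(0,∞)` with `p' > 0` there, satisfying
`limsup_{ρ→∞} p(ρ)/P(ρ) < ∞` and `liminf_{ρ→∞} p(ρ)/ρ^γ ≥ pInf > 0` for some
`γ > 1`: for every `ρtil > 0` there is `C > 0` with
`ρ^γ ≤ C (1 + P(ρ) − P'(ρtil)(ρ − ρtil) − P(ρtil))` for all `ρ ≥ 0`. -/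
theorem relative_energy_coercivity
    (ρref0 : ℝ) (hρref0 : 0 < ρref0)
    (p p' : ℝ → ℝ) (γ pInf : ℝ) (hγ : 1 < γ) (hpInf : 0 < pInf)
    (hp_cont : ContinuousOn p (Set.Ici 0))
    (hp_deriv : ∀ ρ ∈ Set.Ioi (0 : ℝ), HasDerivAt p (p' ρ) ρ)
    (hp'_cont : ContinuousOn p' (Set.Ioi 0))
    (hp'_pos : ∀ ρ ∈ Set.Ioi (0 : ℝ), 0 < p' ρ)
    (P : ℝ → ℝ)
    (hP : ∀ ρ ∈ Set.Ioi (0 : ℝ), P ρ = ρ * ∫ z in ρref0..ρ, p z / z ^ 2)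
    (hP0 : Filter.Tendsto P (nhdsWithin 0 (Set.Ioi 0)) (nhds (P 0)))
    (hp_limsup : ∃ PInf : ℝ, ∀ᶠ ρ in Filter.atTop, p ρ / P ρ ≤ PInf)
    (hp_liminf : ∀ c : ℝ, c < pInf → ∀ᶠ ρ in Filter.atTop, c ≤ p ρ / ρ ^ γ) :
    ∀ ρtil : ℝ, 0 < ρtil →
      ∃ C : ℝ, 0 < C ∧
        ∀ ρ : ℝ, 0 ≤ ρ →
          ρ ^ γ ≤ C * (1 + P ρ - deriv P ρtil * (ρ - ρtil) - P ρtil) := by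
  intro ρtil hρtil
  have hγ1 : 0 < γ - 1 := by linarith
  set g : ℝ → ℝ := fun z => p z / z ^ 2 with hg
  have hg_cont : ContinuousOn g (Ioi 0) := by
    apply ContinuousOn.div (hp_cont.mono (Ioi_subset_Ici le_rfl))
      (continuousOn_pow 2)
    intro z hz
    exact pow_ne_zero 2 (ne_of_gt hz)
  have huIcc : ∀ {a b : ℝ}, 0 < a → 0 < b → uIcc a b ⊆ Ioi 0 := by
    intro a b ha hb z hz
    exact lt_of_lt_of_le (lt_min ha hb) hz.1
  have hg_int : ∀ {a b : ℝ}, 0 < a → 0 < b → IntervalIntegrable g volume a b :=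
    fun ha hb => (hg_cont.mono (huIcc ha hb)).intervalIntegrable
  set Q : ℝ → ℝ := fun ρ => ∫ z in ρref0..ρ, g z with hQ
  have hQderiv : ∀ x ∈ Ioi (0:ℝ), HasDerivAt Q (g x) x := by
    intro x hx
    exact intervalIntegral.integral_hasDerivAt_right (hg_int hρref0 hx)
      (hg_cont.stronglyMeasurableAtFilter isOpen_Ioi x hx)
      (hg_cont.continuousAt (isOpen_Ioi.mem_nhds hx))
  have hPderiv : ∀ x ∈ Ioi (0:ℝ), HasDerivAt P (Q x + p x / x) x := by
    intro x hx
    have hx0 : x ≠ 0 := ne_of_gt hx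
    have h1 : HasDerivAt (fun u => u * Q u) (1 * Q x + x * g x) x :=
      (hasDerivAt_id x).mul (hQderiv x hx)
    have h2 : (1 : ℝ) * Q x + x * g x = Q x + p x / x := by
      rw [hg]
      field_simp
    rw [h2] at h1
    apply h1.congr_of_eventuallyEq
    filter_upwards [isOpen_Ioi.mem_nhds hx] with y hy
    exact hP y hy
  set G : ℝ → ℝ := fun x => Q x + p x / x with hGdef
  have hGderiv : ∀ x ∈ Ioi (0:ℝ), HasDerivAt G (p' x / x) x := by
    intro x hx
    have hx0 : x ≠ 0 := ne_of_gt hx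
    have h1 : HasDerivAt (fun u => p u / u) ((p' x * x - p x * 1) / x ^ 2) x :=
      (hp_deriv x hx).div (hasDerivAt_id x) hx0
    have h2 := (hQderiv x hx).add h1
    refine h2.congr_deriv ?_
    rw [hg]
    field_simp
    ring
  have hGmono : StrictMonoOn G (Ioi 0) := by
    apply strictMonoOn_of_deriv_pos (convex_Ioi 0)
    · exact fun x hx => (hGderiv x hx).continuousAt.continuousWithinAt
    · intro x hx
      rw [interior_Ioi] at hx
      rw [(hGderiv x hx).deriv]
      exact div_pos (hp'_pos x hx) hx
  have hderivPtil : deriv P ρtil = G ρtil := (hPderiv ρtil hρtil).deriv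
  -- nonnegativity of the relative energy
  have key : ∀ ρ : ℝ, 0 < ρ → 0 ≤ P ρ - G ρtil * (ρ - ρtil) - P ρtil := by
    intro ρ hρ
    rcases lt_trichotomy ρ ρtil with h | h | h
    · obtain ⟨c, hc, hc'⟩ := exists_hasDerivAt_eq_slope P G h
        (fun x hx => (hPderiv x (lt_of_lt_of_le hρ hx.1)).continuousAt.continuousWithinAt)
        (fun x hx => hPderiv x (lt_trans hρ hx.1))
      have hGc : G c < G ρtil :=
        hGmono (lt_trans hρ hc.1) hρtil hc.2
      rw [eq_div_iff (sub_ne_zero.mpr (ne_of_gt h))] at hc'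
      nlinarith [hc', hGc, sub_pos.mpr h]
    · rw [h]; ring_nf; simp
    · obtain ⟨c, hc, hc'⟩ := exists_hasDerivAt_eq_slope P G h
        (fun x hx => (hPderiv x (lt_of_lt_of_le hρtil hx.1)).continuousAt.continuousWithinAt)
        (fun x hx => hPderiv x (lt_trans hρtil hx.1))
      have hGc : G ρtil < G c := hGmono hρtil (lt_trans hρtil hc.1) hc.1
      rw [eq_div_iff (sub_ne_zero.mpr (ne_of_gt h))] at hc'
      nlinarith [hc', hGc, sub_pos.mpr h]
  have hE_nonneg : ∀ ρ : ℝ, 0 ≤ ρ → 0 ≤ P ρ - G ρtil * (ρ - ρtil) - P ρtil := by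
    intro ρ hρ
    rcases eq_or_lt_of_le hρ with h0 | h0
    · rw [← h0]
      have hT : Tendsto (fun x => P x - G ρtil * (x - ρtil) - P ρtil)
          (nhdsWithin 0 (Ioi 0)) (nhds (P 0 - G ρtil * ((0:ℝ) - ρtil) - P ρtil)) := by
        apply Tendsto.sub _ tendsto_const_nhds
        apply hP0.sub
        exact ((continuous_const.mul (continuous_id.sub continuous_const)).tendsto 0).mono_left
          nhdsWithin_le_nhds
      exact ge_of_tendsto hT (eventually_nhdsWithin_of_forall key)
    · exact key ρ h0
  -- growth of P
  obtain ⟨M0, hM0⟩ := eventually_atTop.mp (hp_liminf (pInf / 2) (by linarith))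
  set M : ℝ := max M0 (max ρref0 1) with hM
  have hM1 : (1:ℝ) ≤ M := le_trans (le_max_right _ _) (le_max_right _ _)
  have hMpos : (0:ℝ) < M := lt_of_lt_of_le one_pos hM1
  have hM0le : M0 ≤ M := le_max_left _ _
  set c1 : ℝ := pInf / 2 / (γ - 1) with hc1
  have hc1pos : 0 < c1 := div_pos (by linarith) hγ1
  set C0 : ℝ := Q M - c1 * M ^ (γ - 1) with hC0
  have hgrow : ∀ ρ : ℝ, M ≤ ρ → c1 * ρ ^ γ + C0 * ρ ≤ P ρ := by
    intro ρ hρM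
    have hρpos : 0 < ρ := lt_of_lt_of_le hMpos hρM
    have hsplit : Q M + ∫ z in M..ρ, g z = Q ρ :=
      intervalIntegral.integral_add_adjacent_intervals (hg_int hρref0 hMpos) (hg_int hMpos hρpos)
    have hptlower : ∀ z ∈ Icc M ρ, pInf / 2 * z ^ (γ - 2) ≤ g z := by
      intro z hz
      have hzpos : 0 < z := lt_of_lt_of_le hMpos hz.1
      have hz2 : (0:ℝ) < z ^ 2 := by positivity
      have h1 : pInf / 2 ≤ p z / z ^ γ := hM0 z (le_trans hM0le hz.1)
      have hzγ : (0:ℝ) < z ^ γ := Real.rpow_pos_of_pos hzpos γ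
      rw [le_div_iff₀ hzγ] at h1
      show pInf / 2 * z ^ (γ - 2) ≤ p z / z ^ 2
      rw [le_div_iff₀ hz2]
      calc pInf / 2 * z ^ (γ - 2) * z ^ 2 = pInf / 2 * z ^ γ := by
            rw [mul_assoc, ← Real.rpow_natCast z 2, ← Real.rpow_add hzpos]
            norm_num
        _ ≤ p z := h1
    have hint1 : IntervalIntegrable (fun z => pInf / 2 * z ^ (γ - 2)) volume M ρ :=
      (intervalIntegral.intervalIntegrable_rpow' (by linarith)).const_mul _
    have hmono := intervalIntegral.integral_mono_on hρM hint1 (hg_int hMpos hρpos) hptlower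
    have hval : (∫ z in M..ρ, pInf / 2 * z ^ (γ - 2))
        = c1 * ρ ^ (γ - 1) - c1 * M ^ (γ - 1) := by
      rw [intervalIntegral.integral_const_mul, integral_rpow (Or.inl (by linarith))]
      have he : γ - 2 + 1 = γ - 1 := by ring
      rw [he, hc1]
      field_simp
    have hQlow : c1 * ρ ^ (γ - 1) + C0 ≤ Q ρ := by
      rw [← hsplit, hC0]
      rw [hval] at hmono
      linarith
    have hPρ : P ρ = ρ * Q ρ := hP ρ hρpos
    have hsplitρ : ρ ^ γ = ρ * ρ ^ (γ - 1) := by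
      have : ρ ^ ((1:ℝ) + (γ - 1)) = ρ ^ (1:ℝ) * ρ ^ (γ - 1) := Real.rpow_add hρpos 1 (γ - 1)
      rw [Real.rpow_one] at this
      rw [← this]
      norm_num
    rw [hPρ]
    calc c1 * ρ ^ γ + C0 * ρ = ρ * (c1 * ρ ^ (γ - 1) + C0) := by rw [hsplitρ]; ring
      _ ≤ ρ * Q ρ := mul_le_mul_of_nonneg_left hQlow (le_of_lt hρpos)
  -- assembly
  set a : ℝ := G ρtil with ha
  set K : ℝ := (|a - C0| + |P ρtil - a * ρtil|) / c1 + 1 with hK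
  have hKpos : 0 < K := by positivity
  set M2 : ℝ := max M ((2 * K) ^ (γ - 1)⁻¹) with hM2
  have hM2M : M ≤ M2 := le_max_left _ _
  have hM2pos : 0 < M2 := lt_of_lt_of_le hMpos hM2M
  set C : ℝ := 2 / c1 + 2 * K + M2 ^ γ with hC
  have hM2γpos : 0 < M2 ^ γ := Real.rpow_pos_of_pos hM2pos γ
  have hCpos : 0 < C := by positivity
  have hM2b : (2 * K) ^ (γ - 1)⁻¹ ≤ M2 := le_max_right _ _
  clear_value M c1 C0 a K M2 C
  refine ⟨C, hCpos, ?_⟩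
  intro ρ hρ
  rw [hderivPtil]
  have hEnn : 0 ≤ P ρ - a * (ρ - ρtil) - P ρtil := hE_nonneg ρ hρ
  set E : ℝ := P ρ - a * (ρ - ρtil) - P ρtil with hE
  clear_value E
  have hgoal : ρ ^ γ ≤ C * (1 + E) := by
    rcases le_or_gt ρ M2 with hcase | hcase
    · have h1 : ρ ^ γ ≤ M2 ^ γ := Real.rpow_le_rpow hρ hcase (by linarith)
      have h2 : M2 ^ γ ≤ C := by
        rw [hC]
        nlinarith [div_pos (by norm_num : (0:ℝ) < 2) hc1pos, hKpos]
      calc ρ ^ γ ≤ M2 ^ γ := h1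
        _ ≤ C := h2
        _ = C * 1 := (mul_one C).symm
        _ ≤ C * (1 + E) := mul_le_mul_of_nonneg_left (by linarith) hCpos.le
    · have hρM : M ≤ ρ := le_trans hM2M (le_of_lt hcase)
      have hρ1 : (1:ℝ) ≤ ρ := le_trans hM1 hρM
      have hρpos : 0 < ρ := lt_of_lt_of_le hMpos hρM
      have hg1 := hgrow ρ hρM
      have hPE : P ρ = E + a * (ρ - ρtil) + P ρtil := by rw [hE]; ring
      have h3 : c1 * ρ ^ γ ≤ E + (a - C0) * ρ + (P ρtil - a * ρtil) := by
        rw [hPE] at hg1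
        linarith
      have hKc1 : |a - C0| + |P ρtil - a * ρtil| ≤ c1 * K := by
        have : c1 * K = |a - C0| + |P ρtil - a * ρtil| + c1 := by
          rw [hK]
          field_simp
        linarith
      have habs1 : (a - C0) * ρ ≤ |a - C0| * ρ :=
        mul_le_mul_of_nonneg_right (le_abs_self _) hρ
      have habs2 : P ρtil - a * ρtil ≤ |P ρtil - a * ρtil| * ρ := by
        calc P ρtil - a * ρtil ≤ |P ρtil - a * ρtil| := le_abs_self _
          _ ≤ |P ρtil - a * ρtil| * ρ := le_mul_of_one_le_right (abs_nonneg _) hρ1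
      have h4a : (|a - C0| + |P ρtil - a * ρtil|) * ρ ≤ c1 * K * ρ :=
        mul_le_mul_of_nonneg_right hKc1 hρ
      have h4 : c1 * ρ ^ γ ≤ E + c1 * K * ρ := by
        linarith [h3, habs1, habs2, h4a]
      -- ρ^(γ-1) ≥ 2K
      have hρ2K : 2 * K ≤ ρ ^ (γ - 1) := by
        have hle : (2 * K) ^ (γ - 1)⁻¹ ≤ ρ := le_trans hM2b (le_of_lt hcase)
        have h5 : ((2 * K) ^ (γ - 1)⁻¹) ^ (γ - 1) ≤ ρ ^ (γ - 1) :=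
          Real.rpow_le_rpow (Real.rpow_nonneg (by linarith) _) hle (le_of_lt hγ1)
        rwa [← Real.rpow_mul (by linarith : (0:ℝ) ≤ 2 * K),
          inv_mul_cancel₀ (ne_of_gt hγ1), Real.rpow_one] at h5
      have hsplitρ : ρ ^ γ = ρ ^ (γ - 1) * ρ := by
        have : ρ ^ ((γ - 1) + (1:ℝ)) = ρ ^ (γ - 1) * ρ ^ (1:ℝ) := Real.rpow_add hρpos _ _
        rw [Real.rpow_one] at this
        rw [← this]
        norm_num
      have h6 : 2 * K * ρ ≤ ρ ^ γ := by
        rw [hsplitρ]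
        exact mul_le_mul_of_nonneg_right hρ2K hρ
      -- c1 ρ^γ ≤ E + (c1/2) ρ^γ
      have h6b : c1 / 2 * (2 * K * ρ) ≤ c1 / 2 * ρ ^ γ :=
        mul_le_mul_of_nonneg_left h6 (by positivity)
      have h7 : c1 / 2 * ρ ^ γ ≤ E := by linarith [h4, h6b]
      have h8 : ρ ^ γ ≤ 2 / c1 * E := by
        rw [div_mul_eq_mul_div, le_div_iff₀ hc1pos]
        linarith [h7]
      have hC2 : 2 / c1 ≤ C := by
        rw [hC]
        linarith [hKpos, hM2γpos]
      calc ρ ^ γ ≤ 2 / c1 * E := h8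
        _ ≤ C * E := mul_le_mul_of_nonneg_right hC2 hEnn
        _ ≤ C * (1 + E) := by linarith [hCpos, mul_one C ▸ le_refl (C * E)]
  calc ρ ^ γ ≤ C * (1 + E) := hgoal
    _ = C * (1 + P ρ - a * (ρ - ρtil) - P ρtil) := by rw [hE]; ring
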